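/- arXiv:1912.03793 — 3 statements merged into one kernel-verified Lean document; each statement's English description precedes it below -/
import Mathlib

section
/- Let K > 0 and ψ > 0 be real numbers. Then (ψ − K)⁺ − K (ln ψ − ln K)⁺ ≥ ((√ψ − √K)⁺)², where x⁺ = max(x, 0). -/
theorem stmt_7 (K ψ : ℝ) (hK : 0 < K) (hψ : 0 < ψ) :
    max (ψ - K) 0 - K * max (Real.log ψ - Real.log K) 0 ≥
      (max (Real.sqrt ψ - Real.sqrt K) 0) ^ 2 := by
  rcases le_total ψ K with h | h
  · rw [max_eq_right (by linarith),
      max_eq_right (sub_nonpos.2 (Real.log_le_log hψ h)),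
      max_eq_right (sub_nonpos.2 (Real.sqrt_le_sqrt h))]
    simp
  · have hsK : 0 < Real.sqrt K := Real.sqrt_pos.2 hK
    have hsψ : 0 < Real.sqrt ψ := Real.sqrt_pos.2 hψ
    have hK2 : Real.sqrt K * Real.sqrt K = K := Real.mul_self_sqrt hK.le
    have hψ2 : Real.sqrt ψ * Real.sqrt ψ = ψ := Real.mul_self_sqrt hψ.le
    rw [max_eq_left (by linarith),
      max_eq_left (sub_nonneg.2 (Real.log_le_log hK h)),
      max_eq_left (sub_nonneg.2 (Real.sqrt_le_sqrt h))]
    have key : Real.log (Real.sqrt ψ / Real.sqrt K) ≤ Real.sqrt ψ / Real.sqrt K - 1 :=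
      Real.log_le_sub_one_of_pos (by positivity)
    have hlog : Real.log (Real.sqrt ψ / Real.sqrt K) =
        (Real.log ψ - Real.log K) / 2 := by
      rw [Real.log_div hsψ.ne' hsK.ne', Real.log_sqrt hψ.le, Real.log_sqrt hK.le]
      ring
    rw [hlog] at key
    have key2 : Real.sqrt K * ((Real.log ψ - Real.log K) / 2) ≤
        Real.sqrt ψ - Real.sqrt K := by
      have := mul_le_mul_of_nonneg_left key hsK.le
      rwa [mul_sub, mul_div_cancel₀ _ hsK.ne', mul_one] at this
    nlinarith [mul_le_mul_of_nonneg_left key2 hsK.le, sq_nonneg (Real.sqrt ψ - Real.sqrt K)]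
end

section
/- Let K > 0, n ≥ 0, Kₙ = K(1 − 1/2^{n+1}), and let ψ ≥ K_{n+1}. Then ((√ψ − √Kₙ)⁺)² ≥ ψ / 2^{2(n+3)}. -/
theorem stmt_11 (K : ℝ) (hK : 0 < K) (n : ℕ) (Kn : ℕ → ℝ)
    (hKn : ∀ n, Kn n = K * (1 - 1 / 2 ^ (n + 1)))
    (ψ : ℝ) (hψ : ψ ≥ Kn (n + 1)) :
    (max (Real.sqrt ψ - Real.sqrt (Kn n)) 0) ^ 2 ≥ ψ / 2 ^ (2 * (n + 3)) := by
  set x : ℝ := 1 / 2 ^ (n + 1) with hxdef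
  have hx0 : 0 < x := by positivity
  have hx1 : x ≤ 1 := by
    rw [hxdef, div_le_one (by positivity)]
    exact one_le_pow₀ (by norm_num)
  have hc0 : (0:ℝ) < 1 / 2 ^ (n + 3) := by positivity
  have hc1 : (1:ℝ) / 2 ^ (n + 3) ≤ 1 := by
    rw [div_le_one (by positivity)]
    exact one_le_pow₀ (by norm_num)
  have h2 : (1:ℝ) / 2 ^ (n + 2) = x / 2 := by
    rw [hxdef, pow_succ]; ring
  have h3 : (1:ℝ) / 2 ^ (n + 3) = x / 4 := by
    rw [hxdef, pow_succ, pow_succ]; ring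
  have hKn1pos : 0 < Kn (n + 1) := by
    rw [hKn, h2]
    have : x / 2 < 1 := by linarith
    nlinarith
  have hψpos : 0 < ψ := lt_of_lt_of_le hKn1pos hψ
  have key : Kn n ≤ (1 - 1 / 2 ^ (n + 3)) ^ 2 * ψ := by
    have h1 : Kn n ≤ (1 - 1 / 2 ^ (n + 3)) ^ 2 * Kn (n + 1) := by
      rw [hKn, hKn, h2, h3]
      nlinarith [mul_nonneg (mul_nonneg hK.le (sq_nonneg x))
        (show (0:ℝ) ≤ 10 - x by linarith)]
    have h2' : (1 - 1 / 2 ^ (n + 3)) ^ 2 * Kn (n + 1) ≤ (1 - 1 / 2 ^ (n + 3)) ^ 2 * ψ := by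
      apply mul_le_mul_of_nonneg_left hψ (sq_nonneg _)
    linarith
  have hsqrt : Real.sqrt (Kn n) ≤ (1 - 1 / 2 ^ (n + 3)) * Real.sqrt ψ := by
    have : (1 - 1 / 2 ^ (n + 3)) * Real.sqrt ψ =
        Real.sqrt ((1 - 1 / 2 ^ (n + 3)) ^ 2 * ψ) := by
      rw [Real.sqrt_mul (sq_nonneg _), Real.sqrt_sq (by linarith)]
    rw [this]
    exact Real.sqrt_le_sqrt key
  have hlb : Real.sqrt ψ / 2 ^ (n + 3) ≤ Real.sqrt ψ - Real.sqrt (Kn n) := by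
    have e : (1 - 1 / 2 ^ (n + 3)) * Real.sqrt ψ
        = Real.sqrt ψ - Real.sqrt ψ / 2 ^ (n + 3) := by ring
    rw [e] at hsqrt; linarith
  have hge0 : 0 ≤ Real.sqrt ψ - Real.sqrt (Kn n) := by
    have := Real.sqrt_nonneg ψ
    have : 0 ≤ Real.sqrt ψ / 2 ^ (n + 3) := by positivity
    linarith
  rw [max_eq_left hge0]
  have hsq : (Real.sqrt ψ / 2 ^ (n + 3)) ^ 2 = ψ / 2 ^ (2 * (n + 3)) := by
    rw [div_pow, Real.sq_sqrt hψpos.le, ← pow_mul]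
    ring_nf
  calc ψ / 2 ^ (2 * (n + 3)) = (Real.sqrt ψ / 2 ^ (n + 3)) ^ 2 := hsq.symm
    _ ≤ (Real.sqrt ψ - Real.sqrt (Kn n)) ^ 2 := by
        apply pow_le_pow_left₀ (by positivity) hlb
end

section
/- Let D be a 2×2 symmetric positive definite matrix with entries d₁₁, d₁₂, d₂₂, and let (u₁, u₂) ∈ ℝ² be nonzero. Then the determinant of the 3×3 matrix E with rows (d₁₁u₁ + d₁₂u₂, d₁₂u₁ + d₂₂u₂, 0), (0, d₁₁u₁ + d₁₂u₂, d₁₂u₁ + d₂₂u₂), (d₁₁, 2d₁₂, d₂₂) equals det(D)·(d₁₁u₁² + 2d₁₂u₁u₂ + d₂₂u₂²), which is strictly positive. -/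
theorem stmt_12 (d11 d12 d22 u1 u2 : ℝ)
    (hpos : 0 < d11) (hdet : 0 < d11 * d22 - d12 ^ 2)
    (hu : u1 ≠ 0 ∨ u2 ≠ 0)
    (E : Matrix (Fin 3) (Fin 3) ℝ)
    (hE : E = !![d11 * u1 + d12 * u2, d12 * u1 + d22 * u2, 0;
                 0, d11 * u1 + d12 * u2, d12 * u1 + d22 * u2;
                 d11, 2 * d12, d22]) :
    E.det = (d11 * d22 - d12 ^ 2) * (d11 * u1 ^ 2 + 2 * d12 * u1 * u2 + d22 * u2 ^ 2) ∧
    0 < E.det := by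
  have hdetE : E.det = (d11 * d22 - d12 ^ 2) *
      (d11 * u1 ^ 2 + 2 * d12 * u1 * u2 + d22 * u2 ^ 2) := by
    subst hE; simp [Matrix.det_fin_three]; ring
  have hq : 0 < d11 * u1 ^ 2 + 2 * d12 * u1 * u2 + d22 * u2 ^ 2 := by
    have key : d11 * (d11 * u1 ^ 2 + 2 * d12 * u1 * u2 + d22 * u2 ^ 2) =
        (d11 * u1 + d12 * u2) ^ 2 + (d11 * d22 - d12 ^ 2) * u2 ^ 2 := by ring
    rcases eq_or_ne u2 0 with h2 | h2
    · rcases hu with h1 | h1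
      · subst h2; have := sq_pos_of_ne_zero h1; nlinarith
      · exact absurd h2 h1
    · have : 0 < (d11 * u1 + d12 * u2) ^ 2 + (d11 * d22 - d12 ^ 2) * u2 ^ 2 := by
        have := sq_pos_of_ne_zero h2
        nlinarith [sq_nonneg (d11 * u1 + d12 * u2)]
      nlinarith
  exact ⟨hdetE, by rw [hdetE]; positivity⟩
end
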